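/- Let R be a ring with local units, P a locally projective unitary left R-module, and S a subring of End_R(P) such that P is a unitary right S-module, S·End_R(P) = S, and Pf is a finitely generated left R-module for every idempotent f ∈ S. Set G_P = SHom_R(P,R). Then there is a natural transformation γ : id_{RMod} → RHom_S(G_P, SHom_R(P,−)) such that for each unitary left R-module M, the morphism SHom_R(P, γ_M) : SHom_R(P,M) → SHom_R(P, RHom_S(G_P, SHom_R(P,M))) is an S-module isomorphism, determining a functorial isomorphism SHom_R(P,−) ≅ SHom_R(P, RHom_S(G_P, SHom_R(P,−))). -/

import Mathlib

set_option linter.unusedVariables false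

/-! ### Core: non-unital rings with local units, modules, homomorphisms, categories -/

universe u v w

open MulOpposite CategoryTheory

/-- A ring with local units: every finite subset is contained in a subring
of the form `eRe` for an idempotent `e`; equivalently, every finite subset
admits an idempotent acting as a two-sided identity on it. -/
class HasLocalUnits (R : Type u) [NonUnitalRing R] : Prop where
  exists_unit : ∀ s : Finset R, ∃ e : R, e * e = e ∧ ∀ x ∈ s, e * x = x ∧ x * e = x

/-- A (left) module over a non-unital ring. -/
class LMod (R : Type u) [NonUnitalRing R] (M : Type v) [AddCommGroup M] extends SMul R M where
  smul_add' : ∀ (r : R) (m n : M), r • (m + n) = r • m + r • n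
  add_smul' : ∀ (r s : R) (m : M), (r + s) • m = r • m + s • m
  mul_smul' : ∀ (r s : R) (m : M), (r * s) • m = r • (s • m)

section basic
variable {R : Type u} [NonUnitalRing R] {M : Type v} [AddCommGroup M] [LMod R M]

theorem LMod.smul_zero' (r : R) : r • (0 : M) = 0 := by
  have h := LMod.smul_add' r (0 : M) 0
  rw [add_zero] at h
  have h2 : r • (0 : M) + r • (0 : M) = r • (0 : M) + 0 := by rw [← h, add_zero]
  exact add_left_cancel h2

theorem LMod.zero_smul' (m : M) : (0 : R) • m = 0 := by
  have h := LMod.add_smul' (0 : R) 0 m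
  rw [add_zero] at h
  have h2 : (0 : R) • m + (0 : R) • m = (0 : R) • m + 0 := by rw [← h, add_zero]
  exact add_left_cancel h2

theorem LMod.smul_neg' (r : R) (m : M) : r • (-m) = -(r • m) := by
  have h : r • m + r • (-m) = 0 := by
    rw [← LMod.smul_add' r m (-m), add_neg_cancel, LMod.smul_zero']
  exact eq_neg_of_add_eq_zero_right h

end basic

/-- `f : M → N` is a homomorphism of (non-unital) `R`-modules. -/
structure IsLHom (R : Type u) [NonUnitalRing R] {M : Type v} {N : Type w}
    [AddCommGroup M] [AddCommGroup N] [LMod R M] [LMod R N] (f : M → N) : Prop where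
  map_add : ∀ x y, f (x + y) = f x + f y
  map_smul : ∀ (r : R) (x : M), f (r • x) = r • f x

theorem IsLHom.map_zero {R : Type u} [NonUnitalRing R] {M : Type v} {N : Type w}
    [AddCommGroup M] [AddCommGroup N] [LMod R M] [LMod R N] {f : M → N}
    (hf : IsLHom R f) : f 0 = 0 := by
  have h := hf.map_add 0 0
  rw [add_zero] at h
  have h2 : f 0 + f 0 = f 0 + 0 := by rw [← h, add_zero]
  exact add_left_cancel h2

theorem IsLHom.map_neg {R : Type u} [NonUnitalRing R] {M : Type v} {N : Type w}
    [AddCommGroup M] [AddCommGroup N] [LMod R M] [LMod R N] {f : M → N}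
    (hf : IsLHom R f) (x : M) : f (-x) = -(f x) := by
  have h : f x + f (-x) = 0 := by rw [← hf.map_add, add_neg_cancel, hf.map_zero]
  exact eq_neg_of_add_eq_zero_right h

/-- The type of homomorphisms of (non-unital) `R`-modules. -/
def LinMap (R : Type u) [NonUnitalRing R] (M : Type v) (N : Type w)
    [AddCommGroup M] [AddCommGroup N] [LMod R M] [LMod R N] : Type (max v w) :=
  {f : M → N // IsLHom R f}

namespace LinMap

variable {R : Type u} [NonUnitalRing R] {M : Type v} {N : Type w}
    [AddCommGroup M] [AddCommGroup N] [LMod R M] [LMod R N]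

theorem ext {f g : LinMap R M N} (h : f.1 = g.1) : f = g := Subtype.ext h

instance : Add (LinMap R M N) :=
  ⟨fun f g => ⟨fun x => f.1 x + g.1 x,
    ⟨fun x y => by rw [f.2.map_add, g.2.map_add]; abel,
     fun r x => by rw [f.2.map_smul, g.2.map_smul, LMod.smul_add']⟩⟩⟩

instance : Zero (LinMap R M N) :=
  ⟨⟨fun _ => 0, ⟨fun _ _ => by rw [add_zero], fun r _ => (LMod.smul_zero' r).symm⟩⟩⟩

instance : Neg (LinMap R M N) :=
  ⟨fun f => ⟨fun x => -(f.1 x),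
    ⟨fun x y => by rw [f.2.map_add]; abel,
     fun r x => by rw [f.2.map_smul, LMod.smul_neg']⟩⟩⟩

instance : AddCommGroup (LinMap R M N) where
  add_assoc f g h := ext (funext fun x => add_assoc _ _ _)
  zero_add f := ext (funext fun x => zero_add _)
  add_zero f := ext (funext fun x => add_zero _)
  add_comm f g := ext (funext fun x => add_comm _ _)
  neg_add_cancel f := ext (funext fun x => neg_add_cancel _)
  nsmul := nsmulRec
  zsmul := zsmulRec

@[simp] theorem add_apply (f g : LinMap R M N) (x : M) : (f + g).1 x = f.1 x + g.1 x := rfl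
@[simp] theorem zero_apply (x : M) : (0 : LinMap R M N).1 x = 0 := rfl
@[simp] theorem neg_apply (f : LinMap R M N) (x : M) : (-f).1 x = -(f.1 x) := rfl

end LinMap

/-- The endomorphism ring of a module over a non-unital ring, with the
"diagrammatic" multiplication `(f * g) x = g (f x)` (i.e. `f * g` means
"first `f`, then `g`", matching homomorphisms written on the right). -/
instance LinMap.instNonUnitalRing {R : Type u} [NonUnitalRing R] {M : Type v}
    [AddCommGroup M] [LMod R M] : NonUnitalRing (LinMap R M M) :=
  { (inferInstance : AddCommGroup (LinMap R M M)) with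
    mul := fun f g => ⟨fun x => g.1 (f.1 x),
      ⟨fun x y => by rw [f.2.map_add, g.2.map_add], fun r x => by rw [f.2.map_smul, g.2.map_smul]⟩⟩
    left_distrib := fun f g h => LinMap.ext (funext fun x => rfl)
    right_distrib := fun f g h => LinMap.ext (funext fun x => h.2.map_add _ _)
    zero_mul := fun f => LinMap.ext (funext fun x => f.2.map_zero)
    mul_zero := fun f => LinMap.ext (funext fun x => rfl)
    mul_assoc := fun f g h => LinMap.ext (funext fun x => rfl) }

@[simp] theorem LinMap.mul_apply {R : Type u} [NonUnitalRing R] {M : Type v}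
    [AddCommGroup M] [LMod R M] (f g : LinMap R M M) (x : M) : (f * g).1 x = g.1 (f.1 x) := rfl

/-- A module `M` over a non-unital ring `R` is unitary if `RM = M`. -/
def IsUnitary (R : Type u) [NonUnitalRing R] (M : Type v) [AddCommGroup M] [LMod R M] : Prop :=
  ∀ m : M, m ∈ AddSubgroup.closure {x : M | ∃ (r : R) (n : M), x = r • n}

/-- The `R`-submodule (as an additive subgroup) generated by a subset. -/
def lspan (R : Type u) [NonUnitalRing R] {M : Type v} [AddCommGroup M] [LMod R M]
    (X : Set M) : AddSubgroup M :=
  AddSubgroup.closure (X ∪ {m | ∃ (r : R) (x : M), x ∈ X ∧ m = r • x})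

/-- A subset `A` of a module is finitely generated (as an `R`-submodule). -/
def IsFGSet (R : Type u) [NonUnitalRing R] {M : Type v} [AddCommGroup M] [LMod R M]
    (A : Set M) : Prop :=
  ∃ s : Finset M, (↑s : Set M) ⊆ A ∧ ∀ a ∈ A, a ∈ lspan R (↑s : Set M)

/-- A finitely generated module over a non-unital ring. -/
def IsFG (R : Type u) [NonUnitalRing R] (M : Type v) [AddCommGroup M] [LMod R M] : Prop :=
  ∃ s : Finset M, ∀ m : M, m ∈ lspan R (↑s : Set M)

/-- The category of unitary left modules over a ring with local units
(objects: unitary left `R`-modules). -/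
structure UMod (R : Type u) [NonUnitalRing R] : Type (max u (v + 1)) where
  carrier : Type v
  [grp : AddCommGroup carrier]
  [mod : LMod R carrier]
  unitary : IsUnitary R carrier

attribute [instance] UMod.grp UMod.mod

instance {R : Type u} [NonUnitalRing R] : CoeSort (UMod.{u, v} R) (Type v) := ⟨UMod.carrier⟩

instance UMod.instCategory {R : Type u} [NonUnitalRing R] : Category (UMod.{u, v} R) where
  Hom M N := LinMap R M.carrier N.carrier
  id M := ⟨fun x => x, ⟨fun _ _ => rfl, fun _ _ => rfl⟩⟩
  comp f g := ⟨fun x => g.1 (f.1 x),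
    ⟨fun x y => by rw [f.2.map_add, g.2.map_add], fun r x => by rw [f.2.map_smul, g.2.map_smul]⟩⟩
  id_comp f := LinMap.ext rfl
  comp_id f := LinMap.ext rfl
  assoc f g h := LinMap.ext rfl

@[simp] theorem UMod.comp_apply {R : Type u} [NonUnitalRing R] {M N K : UMod.{u, v} R}
    (f : M ⟶ N) (g : N ⟶ K) (x : M.carrier) : (f ≫ g).1 x = g.1 (f.1 x) := rfl

@[simp] theorem UMod.id_apply {R : Type u} [NonUnitalRing R] {M : UMod.{u, v} R}
    (x : M.carrier) : (𝟙 M : M ⟶ M).1 x = x := rfl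

instance UMod.instPreadditive {R : Type u} [NonUnitalRing R] :
    Preadditive (UMod.{u, v} R) where
  homGroup M N := inferInstanceAs (AddCommGroup (LinMap R M.carrier N.carrier))
  add_comp M N K f f' g := LinMap.ext (funext fun x => g.2.map_add _ _)
  comp_add M N K f g g' := LinMap.ext (funext fun x => rfl)

/-- A unitary module `P` is a generator of the category of unitary left `R`-modules. -/
def IsGenerator (R : Type u) [NonUnitalRing R] (P : UMod.{u, v} R) : Prop :=
  ∀ (M B : UMod.{u, v} R) (f g : M ⟶ B), f ≠ g → ∃ h : P ⟶ M, h ≫ f ≠ h ≫ g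

/-- A set of unitary modules is a cogenerating set for the category of
unitary left `R`-modules. -/
def IsCogenSet (R : Type u) [NonUnitalRing R] (𝒰 : Set (UMod.{u, v} R)) : Prop :=
  ∀ (B M : UMod.{u, v} R) (f g : B ⟶ M), f ≠ g → ∃ U' ∈ 𝒰, ∃ h : M ⟶ U', f ≫ h ≠ g ≫ h
/-! ### The largest unitary submodule `C·H` of a module `H`, and induced
module structures on hom-groups -/

section umax

variable (C : Type u) [NonUnitalRing C] (H : Type v) [AddCommGroup H] [LMod C H]

/-- `C·H`, the largest unitary `C`-submodule of the `C`-module `H`. -/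
def umax : AddSubgroup H :=
  AddSubgroup.closure {h : H | ∃ (c : C) (h' : H), h = c • h'}

variable {C H}

theorem smul_mem_umax (c : C) (h : H) : c • h ∈ umax C H :=
  AddSubgroup.subset_closure ⟨c, h, rfl⟩

/-- An additive, `C`-equivariant map carries `C·H` into `C·H'`. -/
theorem umax_mapsTo {H' : Type w} [AddCommGroup H'] [LMod C H'] (T : H → H')
    (hadd : ∀ x y, T (x + y) = T x + T y) (hsmul : ∀ (c : C) (x : H), T (c • x) = c • T x)
    {h : H} (hh : h ∈ umax C H) : T h ∈ umax C H' := by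
  have hT : IsLHom C T := ⟨hadd, hsmul⟩
  induction hh using AddSubgroup.closure_induction with
  | mem x hx =>
    obtain ⟨c, h', rfl⟩ := hx
    rw [hsmul]; exact smul_mem_umax c (T h')
  | zero => rw [hT.map_zero]; exact (umax C H').zero_mem
  | add x y hx hy ihx ihy => rw [hadd]; exact (umax C H').add_mem ihx ihy
  | neg x hx ihx => rw [hT.map_neg]; exact (umax C H').neg_mem ihx

instance umax.instLMod : LMod C ↥(umax C H) where
  smul c h := ⟨c • h.1, smul_mem_umax c h.1⟩
  smul_add' c m n := Subtype.ext (LMod.smul_add' c m.1 n.1)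
  add_smul' c c' m := Subtype.ext (LMod.add_smul' c c' m.1)
  mul_smul' c c' m := Subtype.ext (LMod.mul_smul' c c' m.1)

@[simp] theorem umax.smul_coe (c : C) (h : ↥(umax C H)) : (c • h).1 = c • h.1 := rfl

/-- If a second ring `D` acts on `H` commuting with the `C`-action,
then `C·H` is stable under the `D`-action. -/
theorem umax_stable {D : Type w} [NonUnitalRing D] [LMod D H] [SMulCommClass C D H]
    (d : D) {h : H} (hh : h ∈ umax C H) : d • h ∈ umax C H :=
  umax_mapsTo (fun x => d • x) (fun x y => LMod.smul_add' d x y)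
    (fun c x => (smul_comm c d x).symm) hh

instance umax.instLMod₂ {D : Type w} [NonUnitalRing D] [LMod D H] [SMulCommClass C D H] :
    LMod D ↥(umax C H) where
  smul d h := ⟨d • h.1, umax_stable d h.2⟩
  smul_add' d m n := Subtype.ext (LMod.smul_add' d m.1 n.1)
  add_smul' d d' m := Subtype.ext (LMod.add_smul' d d' m.1)
  mul_smul' d d' m := Subtype.ext (LMod.mul_smul' d d' m.1)

instance umax.instSMulCommClass {D : Type w} [NonUnitalRing D] [LMod D H]
    [SMulCommClass C D H] : SMulCommClass C D ↥(umax C H) :=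
  ⟨fun c d h => Subtype.ext (smul_comm c d h.1)⟩

/-- If `C` has local units, then `C·H` is a unitary `C`-module. -/
theorem umax_unitary [HasLocalUnits C] : IsUnitary C ↥(umax C H) := by
  intro m
  obtain ⟨h, hh⟩ := m
  induction hh using AddSubgroup.closure_induction with
  | mem x hx =>
    obtain ⟨c, h', rfl⟩ := hx
    obtain ⟨e, he, hec⟩ := HasLocalUnits.exists_unit {c}
    have hc := (hec c (Finset.mem_singleton_self c)).1
    refine AddSubgroup.subset_closure ⟨e, ⟨c • h', smul_mem_umax c h'⟩, ?_⟩
    refine Subtype.ext ?_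
    show c • h' = e • (c • h')
    rw [← LMod.mul_smul', hc]
  | zero =>
    have : (⟨(0 : H), (umax C H).zero_mem⟩ : ↥(umax C H)) = 0 := rfl
    rw [this]; exact AddSubgroup.zero_mem _
  | add x y hx hy ihx ihy =>
    have : (⟨x + y, (umax C H).add_mem hx hy⟩ : ↥(umax C H)) =
        ⟨x, hx⟩ + ⟨y, hy⟩ := rfl
    rw [this]; exact AddSubgroup.add_mem _ ihx ihy
  | neg x hx ihx =>
    have : (⟨-x, (umax C H).neg_mem hx⟩ : ↥(umax C H)) = -⟨x, hx⟩ := rfl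
    rw [this]; exact AddSubgroup.neg_mem _ ihx

end umax

section regular

variable (R : Type u) [NonUnitalRing R]

/-- The left regular module structure of a non-unital ring on itself. -/
instance NonUnitalRing.instLModSelf : LMod R R where
  smul := (· * ·)
  smul_add' := mul_add
  add_smul' := add_mul
  mul_smul' := mul_assoc

@[simp] theorem NonUnitalRing.smul_def (r s : R) : r • s = r * s := rfl

/-- The right regular module structure, as a left module over the opposite ring. -/
instance NonUnitalRing.instLModSelfOp : LMod Rᵐᵒᵖ R where
  smul r s := s * r.unop
  smul_add' r m n := add_mul m n r.unop
  add_smul' r r' m := mul_add m r.unop r'.unop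
  mul_smul' r r' m := (mul_assoc m r'.unop r.unop).symm

@[simp] theorem NonUnitalRing.op_smul_def (r : Rᵐᵒᵖ) (s : R) : r • s = s * r.unop := rfl

instance : SMulCommClass R Rᵐᵒᵖ R :=
  ⟨fun r s x => by
    show r * (x * s.unop) = (r * x) * s.unop
    rw [mul_assoc]⟩

/-- Local units pass to the opposite ring. -/
instance instHasLocalUnitsOp [HasLocalUnits R] : HasLocalUnits Rᵐᵒᵖ where
  exists_unit s := by
    classical
    obtain ⟨e, he, h⟩ := HasLocalUnits.exists_unit (R := R) (s.image MulOpposite.unop)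
    refine ⟨MulOpposite.op e, by rw [← MulOpposite.op_mul, he], fun x hx => ?_⟩
    have hx' := h x.unop (Finset.mem_image_of_mem MulOpposite.unop hx)
    constructor
    · conv_lhs => rw [← MulOpposite.op_unop x, ← MulOpposite.op_mul, hx'.2, MulOpposite.op_unop]
    · conv_lhs => rw [← MulOpposite.op_unop x, ← MulOpposite.op_mul, hx'.1, MulOpposite.op_unop]

end regular

section homact

variable {A B C : Type u} [NonUnitalRing A] [NonUnitalRing B] [NonUnitalRing C]
variable {X : Type v} {Y : Type w} [AddCommGroup X] [AddCommGroup Y] [LMod B X] [LMod B Y]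

/-- The action of `A` on `Hom_B(X, Y)` by precomposition with the right
`A`-action on `X` (homomorphisms written on the right: `(a • f) x = f (x·a)`). -/
instance LinMap.instLModPre [LMod Aᵐᵒᵖ X] [SMulCommClass B Aᵐᵒᵖ X] :
    LMod A (LinMap B X Y) where
  smul a f := ⟨fun x => f.1 (op a • x),
    ⟨fun x y => by rw [LMod.smul_add', f.2.map_add],
     fun r x => by rw [← smul_comm r (op a) x, f.2.map_smul]⟩⟩
  smul_add' a f g := LinMap.ext rfl
  add_smul' a a' f := LinMap.ext (funext fun x => by
    show f.1 (op (a + a') • x) = f.1 (op a • x) + f.1 (op a' • x)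
    rw [← f.2.map_add, ← LMod.add_smul']
    rfl)
  mul_smul' a a' f := LinMap.ext (funext fun x => by
    show f.1 (op (a * a') • x) = f.1 (op a' • (op a • x))
    rw [← LMod.mul_smul']
    rfl)

theorem LinMap.pre_smul_apply [LMod Aᵐᵒᵖ X] [SMulCommClass B Aᵐᵒᵖ X]
    (a : A) (f : LinMap B X Y) (x : X) : (a • f).1 x = f.1 (op a • x) := rfl

/-- The action of `C` on `Hom_B(X, Y)` by postcomposition with a commuting
`C`-action on `Y`. -/
instance LinMap.instLModPost [LMod C Y] [SMulCommClass B C Y] :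
    LMod C (LinMap B X Y) where
  smul c f := ⟨fun x => c • f.1 x,
    ⟨fun x y => by rw [f.2.map_add, LMod.smul_add'],
     fun r x => by rw [f.2.map_smul]; exact (smul_comm r c (f.1 x)).symm⟩⟩
  smul_add' c f g := LinMap.ext (funext fun x => LMod.smul_add' c (f.1 x) (g.1 x))
  add_smul' c c' f := LinMap.ext (funext fun x => LMod.add_smul' c c' (f.1 x))
  mul_smul' c c' f := LinMap.ext (funext fun x => LMod.mul_smul' c c' (f.1 x))

theorem LinMap.post_smul_apply [LMod C Y] [SMulCommClass B C Y]
    (c : C) (f : LinMap B X Y) (x : X) : (c • f).1 x = c • (f.1 x) := rfl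

/-- Pre- and postcomposition actions on hom-groups commute. -/
instance LinMap.instSMulCommClassPrePost [LMod Aᵐᵒᵖ X] [SMulCommClass B Aᵐᵒᵖ X]
    [LMod C Y] [SMulCommClass B C Y] : SMulCommClass A C (LinMap B X Y) :=
  ⟨fun a c f => LinMap.ext rfl⟩

end homact
/-! ### Split direct systems and direct limits of unitary modules -/

section dirsys

variable (R : Type u) [NonUnitalRing R]

/-- A split direct system of unitary left `R`-modules, indexed by a
quasi-ordered set `(ι, rel)`: a direct system `(P_i, φ_{ij})` together with
splittings `ψ_{ji} : P_j → P_i` (for `i ≤ j`) such that `φ_{ij} ψ_{ji} = id`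
and `ψ_{kj} ψ_{ji} = ψ_{ki}`. -/
structure SplitSystem (ι : Type w) (rel : ι → ι → Prop) : Type (max u w (v + 1)) where
  obj : ι → UMod.{u, v} R
  map : ∀ {i j : ι}, rel i j → (obj i ⟶ obj j)
  split : ∀ {i j : ι}, rel i j → (obj j ⟶ obj i)
  map_self : ∀ {i : ι} (h : rel i i) (x : (obj i).carrier), (map h).1 x = x
  map_map : ∀ {i j k : ι} (hij : rel i j) (hjk : rel j k) (hik : rel i k)
    (x : (obj i).carrier), (map hjk).1 ((map hij).1 x) = (map hik).1 x
  split_map : ∀ {i j : ι} (h : rel i j) (x : (obj i).carrier),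
    (split h).1 ((map h).1 x) = x
  split_split : ∀ {i j k : ι} (hij : rel i j) (hjk : rel j k) (hik : rel i k)
    (x : (obj k).carrier), (split hij).1 ((split hjk).1 x) = (split hik).1 x

/-- `P`, together with homomorphisms `φ_i : P_i → P`, is a direct limit of the
direct system `(P_i, φ_{ij})` (with directed index set): the `φ_i` are
compatible, every element of `P` comes from some `P_i`, and everything killed
by `φ_i` is eventually killed in the system. -/
structure LimitCocone {ι : Type w} {rel : ι → ι → Prop} (D : SplitSystem.{u, v} R ι rel)
    (P : Type v) [AddCommGroup P] [LMod R P] : Type (max u w v) where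
  incl : ∀ i, LinMap R (D.obj i).carrier P
  compat : ∀ {i j : ι} (h : rel i j) (x : (D.obj i).carrier),
    (incl j).1 ((D.map h).1 x) = (incl i).1 x
  exhaustive : ∀ x : P, ∃ (i : ι) (y : (D.obj i).carrier), (incl i).1 y = x
  eventually_zero : ∀ i (y : (D.obj i).carrier), (incl i).1 y = 0 →
    ∃ j, ∃ h : rel i j, (D.map h).1 y = 0

/-- A unitary left `R`-module is locally projective if it is a direct limit of a
split direct system of finitely generated projective unitary left `R`-modules. -/
def IsLocallyProjective (P : Type v) [AddCommGroup P] [LMod R P] : Prop :=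
  ∃ (ι : Type v) (rel : ι → ι → Prop),
    (∀ i, rel i i) ∧ (∀ {i j k}, rel i j → rel j k → rel i k) ∧
    Nonempty ι ∧ (∀ i j, ∃ k, rel i k ∧ rel j k) ∧
    ∃ (D : SplitSystem.{u, v} R ι rel) (_ : LimitCocone R D P),
      ∀ i, IsFG R (D.obj i).carrier ∧ CategoryTheory.Projective (D.obj i)

variable {R}

/-- The transition maps `Ω_{ij} : End_R(P_i) → End_R(P_j)`, `α ↦ ψ_{ji} α φ_{ij}`,
of the direct system of endomorphism rings associated to a split direct system. -/
def SplitSystem.endTrans {ι : Type w} {rel : ι → ι → Prop}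
    (D : SplitSystem.{u, v} R ι rel) {i j : ι} (h : rel i j)
    (a : LinMap R (D.obj i).carrier (D.obj i).carrier) :
    LinMap R (D.obj j).carrier (D.obj j).carrier :=
  ⟨fun x => (D.map h).1 (a.1 ((D.split h).1 x)),
   ⟨fun x y => by rw [(D.split h).2.map_add, a.2.map_add, (D.map h).2.map_add],
    fun r x => by rw [(D.split h).2.map_smul, a.2.map_smul, (D.map h).2.map_smul]⟩⟩

end dirsys
/-! ### The functor `SHom_R(P,−)` and related constructions for a bimodule `P` -/

section shom

variable (R S : Type u) [NonUnitalRing R] [NonUnitalRing S]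
variable (P : Type u) [AddCommGroup P] [LMod R P] [LMod Sᵐᵒᵖ P] [SMulCommClass R Sᵐᵒᵖ P]

/-- `SHom_R(P,M) = S·Hom_R(P,M)`, the largest unitary left `S`-submodule of
`Hom_R(P,M)`, as a type. -/
abbrev SHom (M : Type u) [AddCommGroup M] [LMod R M] : Type u :=
  ↥(umax S (LinMap R P M))

variable {R S P}

/-- The action of `SHom_R(P,−)` on a homomorphism `g : M → N` (postcomposition). -/
def sHomMap {M N : Type u} [AddCommGroup M] [AddCommGroup N] [LMod R M] [LMod R N]
    (g : LinMap R M N) (α : SHom R S P M) : SHom R S P N :=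
  ⟨⟨fun x => g.1 (α.1.1 x),
    ⟨fun x y => by rw [α.1.2.map_add, g.2.map_add],
     fun r x => by rw [α.1.2.map_smul, g.2.map_smul]⟩⟩,
   umax_mapsTo (C := S)
     (fun f => ⟨fun x => g.1 (f.1 x),
       ⟨fun x y => by rw [f.2.map_add, g.2.map_add],
        fun r x => by rw [f.2.map_smul, g.2.map_smul]⟩⟩)
     (fun f f' => LinMap.ext (funext fun x => g.2.map_add _ _))
     (fun s f => LinMap.ext rfl) α.2⟩

theorem sHomMap_apply {M N : Type u} [AddCommGroup M] [AddCommGroup N] [LMod R M]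
    [LMod R N] (g : LinMap R M N) (α : SHom R S P M) (x : P) :
    ((sHomMap g α).1).1 x = g.1 (α.1.1 x) := rfl

theorem sHomMap_add {M N : Type u} [AddCommGroup M] [AddCommGroup N] [LMod R M]
    [LMod R N] (g : LinMap R M N) (α β : SHom R S P M) :
    sHomMap g (α + β) = sHomMap g α + sHomMap g β :=
  Subtype.ext (LinMap.ext (funext fun x =>
    show g.1 (α.1.1 x + β.1.1 x) = g.1 (α.1.1 x) + g.1 (β.1.1 x) from g.2.map_add _ _))

theorem sHomMap_smul {M N : Type u} [AddCommGroup M] [AddCommGroup N] [LMod R M]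
    [LMod R N] (g : LinMap R M N) (s : S) (α : SHom R S P M) :
    sHomMap g (s • α) = s • sHomMap g α :=
  Subtype.ext (LinMap.ext (funext fun x => rfl))

/-- `SHom_R(P,g)` as a homomorphism of `S`-modules. -/
def sHomLin {M N : Type u} [AddCommGroup M] [AddCommGroup N] [LMod R M] [LMod R N]
    (g : LinMap R M N) : LinMap S (SHom R S P M) (SHom R S P N) :=
  ⟨sHomMap g, ⟨sHomMap_add g, fun s α => sHomMap_smul g s α⟩⟩

variable (R S P)

/-- The functor `SHom_R(P,−)` from unitary left `R`-modules to unitary left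
`S`-modules. -/
def sHomF [HasLocalUnits S] : UMod.{u, u} R ⥤ UMod.{u, u} S where
  obj M := ⟨SHom R S P M.carrier, umax_unitary⟩
  map g := sHomLin g
  map_id M := LinMap.ext (funext fun α => Subtype.ext (LinMap.ext (funext fun x => rfl)))
  map_comp f g := LinMap.ext (funext fun α => Subtype.ext (LinMap.ext (funext fun x => rfl)))

/-- `G_P = SHom_R(P,R)`, an `S`-`R`-bimodule. -/
abbrev GP : Type u := ↥(umax S (LinMap R P R))

/-- `RHom_S(G_P, N) = R·Hom_S(G_P, N)`, as a type. -/
abbrev RHomG (N : Type u) [AddCommGroup N] [LMod S N] : Type u :=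
  ↥(umax R (LinMap S (GP R S P) N))

variable {R S P}

/-- The action of `RHom_S(G_P,−)` on a homomorphism of `S`-modules. -/
def rHomGMap {N N' : Type u} [AddCommGroup N] [AddCommGroup N'] [LMod S N] [LMod S N']
    (g : LinMap S N N') (α : RHomG R S P N) : RHomG R S P N' :=
  ⟨⟨fun β => g.1 (α.1.1 β),
    ⟨fun x y => by rw [α.1.2.map_add, g.2.map_add],
     fun s x => by rw [α.1.2.map_smul, g.2.map_smul]⟩⟩,
   umax_mapsTo (C := R)
     (fun f => ⟨fun β => g.1 (f.1 β),
       ⟨fun x y => by rw [f.2.map_add, g.2.map_add],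
        fun s x => by rw [f.2.map_smul, g.2.map_smul]⟩⟩)
     (fun f f' => LinMap.ext (funext fun β => g.2.map_add _ _))
     (fun r f => LinMap.ext rfl) α.2⟩

variable (R S P)

/-- The functor `RHom_S(G_P,−)` from unitary left `S`-modules to unitary left
`R`-modules. -/
def rHomGF [HasLocalUnits R] : UMod.{u, u} S ⥤ UMod.{u, u} R where
  obj N := ⟨RHomG R S P N.carrier, umax_unitary⟩
  map g := ⟨rHomGMap g,
    ⟨fun α β => Subtype.ext (LinMap.ext (funext fun x =>
       show g.1 (α.1.1 x + β.1.1 x) = g.1 (α.1.1 x) + g.1 (β.1.1 x) from g.2.map_add _ _)),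
     fun r α => Subtype.ext (LinMap.ext (funext fun x => rfl))⟩⟩
  map_id N := LinMap.ext (funext fun α => Subtype.ext (LinMap.ext (funext fun x => rfl)))
  map_comp f g := LinMap.ext (funext fun α => Subtype.ext (LinMap.ext (funext fun x => rfl)))

variable {R S P}

/-- The inner component of the evaluation map `γ`: for `n ∈ N` and
`β ∈ Hom_R(P,R)`, the homomorphism `P → N`, `x ↦ (x)β·n`. -/
def gammaInner {N : Type u} [AddCommGroup N] [LMod R N] (n : N) (β : LinMap R P R) :
    LinMap R P N :=
  ⟨fun x => (β.1 x) • n,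
   ⟨fun x y => by rw [β.2.map_add, LMod.add_smul'],
    fun r x => by rw [β.2.map_smul, NonUnitalRing.smul_def, LMod.mul_smul']⟩⟩

theorem gammaInner_mem {N : Type u} [AddCommGroup N] [LMod R N] (n : N)
    {β : LinMap R P R} (hβ : β ∈ umax S (LinMap R P R)) :
    gammaInner n β ∈ umax S (LinMap R P N) :=
  umax_mapsTo (C := S) (fun β => gammaInner n β)
    (fun β β' => LinMap.ext (funext fun x => LMod.add_smul' _ _ _))
    (fun s β => LinMap.ext rfl) hβ

variable (R S P)

/-- The evaluation map `γ_N : N → RHom_S(G_P, SHom_R(P,N))` (before checking that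
its values lie in the unitary part `R·Hom_S(G_P, SHom_R(P,N))`):
`n ↦ (β ↦ (x ↦ (x)β·n))`. -/
def gammaFun (N : Type u) [AddCommGroup N] [LMod R N] (n : N) :
    LinMap S (GP R S P) (SHom R S P N) :=
  ⟨fun β => ⟨gammaInner n β.1, gammaInner_mem n β.2⟩,
   ⟨fun β β' => Subtype.ext (LinMap.ext (funext fun x => LMod.add_smul' _ _ _)),
    fun s β => Subtype.ext (LinMap.ext rfl)⟩⟩

/-- The `s`-trace `sTr(P,M) = Σ_{g ∈ SHom_R(P,M)} Im g` of `P` in `M`. -/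
def sTrSub (M : Type u) [AddCommGroup M] [LMod R M] : AddSubgroup M :=
  AddSubgroup.closure {m : M | ∃ f : LinMap R P M, f ∈ umax S (LinMap R P M) ∧ ∃ x : P, m = f.1 x}

/-- `st_P(M) = 0`: the only `R`-submodule `K ⊆ M` with `SHom_R(P,K) = 0` is the
zero submodule (equivalently, the sum of all such submodules is zero). -/
def stPZero (M : Type u) [AddCommGroup M] [LMod R M] : Prop :=
  ∀ K : AddSubgroup M, (∀ (r : R) (x : M), x ∈ K → r • x ∈ K) →
    (∀ (s : S) (f : LinMap R P M), (∀ x : P, f.1 x ∈ K) → s • f = 0) →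
    ∀ m ∈ K, m = 0

/-- `SHom_R(P,X) = 0`. -/
def sHomZero (X : Type u) [AddCommGroup X] [LMod R X] : Prop :=
  ∀ f : LinMap R P X, f ∈ umax S (LinMap R P X) → f = 0

end shom
/-! ### Bimodules, dual hom functors, reflexivity, Morita duality bimodules,
finiteness conditions -/

section bimod

variable (R S : Type u) [NonUnitalRing R] [NonUnitalRing S]

/-- A bundled `R`-`S`-bimodule over non-unital rings. -/
structure BimodLU : Type (u + 1) where
  carrier : Type u
  [grp : AddCommGroup carrier]
  [lmod : LMod R carrier]
  [rmod : LMod Sᵐᵒᵖ carrier]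
  [comm : SMulCommClass R Sᵐᵒᵖ carrier]
  [comm' : SMulCommClass Sᵐᵒᵖ R carrier]

attribute [instance] BimodLU.grp BimodLU.lmod BimodLU.rmod BimodLU.comm BimodLU.comm'

variable (U : Type u) [AddCommGroup U] [LMod R U] [LMod Sᵐᵒᵖ U] [SMulCommClass R Sᵐᵒᵖ U]
  [SMulCommClass Sᵐᵒᵖ R U]

/-- The canonical map `μ : S → End_R(U)`, `s ↦ (x ↦ x·s)`. -/
def muMap (s : S) : LinMap R U U :=
  ⟨fun x => op s • x,
   ⟨fun x y => LMod.smul_add' (op s) x y, fun r x => (smul_comm r (op s) x).symm⟩⟩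

/-- The canonical map `λ : R → End_S(U)`, `r ↦ (x ↦ r·x)`. -/
def lambdaMap (r : R) : LinMap Sᵐᵒᵖ U U :=
  ⟨fun x => r • x,
   ⟨fun x y => LMod.smul_add' r x y, fun s x => smul_comm r s x⟩⟩

/-- `Hom_R(M,U)S`, the largest unitary right `S`-submodule of `Hom_R(M,U)`,
as a type (a right `S`-module, i.e. a left `Sᵐᵒᵖ`-module). -/
abbrev DHomL (M : Type u) [AddCommGroup M] [LMod R M] : Type u :=
  ↥(umax Sᵐᵒᵖ (LinMap R M U))

/-- `RHom_S(N,U)`, the largest unitary left `R`-submodule of `Hom_S(N,U)`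
for a right `S`-module `N`, as a type. -/
abbrev DHomR (N : Type u) [AddCommGroup N] [LMod Sᵐᵒᵖ N] : Type u :=
  ↥(umax R (LinMap Sᵐᵒᵖ N U))

variable {R S U}

/-- Action of the contravariant functor `Hom_R(−,U)S` on morphisms
(precomposition). -/
def dHomLMap {M N : Type u} [AddCommGroup M] [AddCommGroup N] [LMod R M] [LMod R N]
    (f : LinMap R M N) (α : DHomL R S U N) : DHomL R S U M :=
  ⟨⟨fun x => α.1.1 (f.1 x),
    ⟨fun x y => by rw [f.2.map_add, α.1.2.map_add],
     fun r x => by rw [f.2.map_smul, α.1.2.map_smul]⟩⟩,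
   umax_mapsTo (C := Sᵐᵒᵖ)
     (fun g => ⟨fun x => g.1 (f.1 x),
       ⟨fun x y => by rw [f.2.map_add, g.2.map_add],
        fun r x => by rw [f.2.map_smul, g.2.map_smul]⟩⟩)
     (fun g g' => LinMap.ext rfl) (fun s g => LinMap.ext rfl) α.2⟩

/-- Action of the contravariant functor `RHom_S(−,U)` on morphisms
(precomposition). -/
def dHomRMap {M N : Type u} [AddCommGroup M] [AddCommGroup N] [LMod Sᵐᵒᵖ M]
    [LMod Sᵐᵒᵖ N] (f : LinMap Sᵐᵒᵖ M N) (α : DHomR R S U N) : DHomR R S U M :=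
  ⟨⟨fun x => α.1.1 (f.1 x),
    ⟨fun x y => by rw [f.2.map_add, α.1.2.map_add],
     fun s x => by rw [f.2.map_smul, α.1.2.map_smul]⟩⟩,
   umax_mapsTo (C := R)
     (fun g => ⟨fun x => g.1 (f.1 x),
       ⟨fun x y => by rw [f.2.map_add, g.2.map_add],
        fun s x => by rw [f.2.map_smul, g.2.map_smul]⟩⟩)
     (fun g g' => LinMap.ext rfl) (fun r g => LinMap.ext rfl) α.2⟩

variable (R S U)

/-- The contravariant functor `Hom_R(−,U)S` from unitary left `R`-modules to
unitary right `S`-modules. -/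
def dualL [HasLocalUnits S] : (UMod.{u, u} R)ᵒᵖ ⥤ UMod.{u, u} Sᵐᵒᵖ where
  obj M := ⟨DHomL R S U M.unop.carrier, umax_unitary⟩
  map f := ⟨dHomLMap f.unop,
    ⟨fun α β => Subtype.ext (LinMap.ext (funext fun x => rfl)),
     fun s α => Subtype.ext (LinMap.ext (funext fun x => rfl))⟩⟩
  map_id M := LinMap.ext (funext fun α => Subtype.ext (LinMap.ext (funext fun x => rfl)))
  map_comp f g := LinMap.ext (funext fun α => Subtype.ext (LinMap.ext (funext fun x => rfl)))

/-- The contravariant functor `RHom_S(−,U)` from unitary right `S`-modules to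
unitary left `R`-modules. -/
def dualR [HasLocalUnits R] : (UMod.{u, u} Sᵐᵒᵖ)ᵒᵖ ⥤ UMod.{u, u} R where
  obj N := ⟨DHomR R S U N.unop.carrier, umax_unitary⟩
  map f := ⟨dHomRMap f.unop,
    ⟨fun α β => Subtype.ext (LinMap.ext (funext fun x => rfl)),
     fun r α => Subtype.ext (LinMap.ext (funext fun x => rfl))⟩⟩
  map_id N := LinMap.ext (funext fun α => Subtype.ext (LinMap.ext (funext fun x => rfl)))
  map_comp f g := LinMap.ext (funext fun α => Subtype.ext (LinMap.ext (funext fun x => rfl)))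

/-- The underlying function of the evaluation map
`φ_X : X → RHom_S(Hom_R(X,U)S, U)`, `(x)φ_X : β ↦ (x)β`. -/
def evalFunL (X : Type u) [AddCommGroup X] [LMod R X] (x : X) :
    LinMap Sᵐᵒᵖ (DHomL R S U X) U :=
  ⟨fun β => β.1.1 x, ⟨fun β β' => rfl, fun s β => rfl⟩⟩

/-- A unitary left `R`-module `X` is `U`-reflexive: the evaluation map
`φ_X : X → RHom_S(Hom_R(X,U)S, U)` is an isomorphism. -/
def IsLReflexive (X : Type u) [AddCommGroup X] [LMod R X] : Prop :=
  ∃ h : ∀ x : X, evalFunL R S U X x ∈ umax R (LinMap Sᵐᵒᵖ (DHomL R S U X) U),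
    Function.Bijective (fun x : X => (⟨evalFunL R S U X x, h x⟩ : DHomR R S U (DHomL R S U X)))

/-- The underlying function of the evaluation map
`ψ_Y : Y → Hom_R(RHom_S(Y,U),U)S`, `ψ_Y(y) : α ↦ α(y)`. -/
def evalFunR (Y : Type u) [AddCommGroup Y] [LMod Sᵐᵒᵖ Y] (y : Y) :
    LinMap R (DHomR R S U Y) U :=
  ⟨fun α => α.1.1 y, ⟨fun α α' => rfl, fun r α => rfl⟩⟩

/-- A unitary right `S`-module `Y` is `U`-reflexive: the evaluation map
`ψ_Y : Y → Hom_R(RHom_S(Y,U),U)S` is an isomorphism. -/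
def IsRReflexive (Y : Type u) [AddCommGroup Y] [LMod Sᵐᵒᵖ Y] : Prop :=
  ∃ h : ∀ y : Y, evalFunR R S U Y y ∈ umax Sᵐᵒᵖ (LinMap R (DHomR R S U Y) U),
    Function.Bijective (fun y : Y => (⟨evalFunR R S U Y y, h y⟩ : DHomL R S U (DHomR R S U Y)))

/-- Properties (I) and (II) of a Morita duality bimodule: `U` is the direct
limit of a split direct system of finitely generated injective unitary left
`R`-modules whose members form a cogenerating set for the category of unitary
left `R`-modules, and `μ : S → End_R(U)` is a monomorphism whose image is
exactly the set of endomorphisms factoring through one of the induced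
projections. -/
def SatisfiesI_II : Prop :=
  ∃ (ι : Type u) (rel : ι → ι → Prop),
    (∀ i, rel i i) ∧ (∀ {i j k}, rel i j → rel j k → rel i k) ∧
    Nonempty ι ∧ (∀ i j, ∃ k, rel i k ∧ rel j k) ∧
    ∃ (D : SplitSystem.{u, u} R ι rel) (c : LimitCocone R D U)
      (proj : ∀ i, LinMap R U (D.obj i).carrier),
      (∀ i, IsFG R (D.obj i).carrier ∧ CategoryTheory.Injective (D.obj i)) ∧
      IsCogenSet R {M | ∃ i, M = D.obj i} ∧
      (∀ i (x : (D.obj i).carrier), (proj i).1 ((c.incl i).1 x) = x) ∧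
      (∀ {i j} (h : rel i j) (x : U), (D.split h).1 ((proj j).1 x) = (proj i).1 x) ∧
      Function.Injective (muMap R S U) ∧
      Set.range (muMap R S U) =
        {g : LinMap R U U | ∃ (i : ι) (γ : LinMap R (D.obj i).carrier U),
          g.1 = fun x => γ.1 ((proj i).1 x)}

/-- Properties (III) and (IV) of a Morita duality bimodule (the right-module
side, dual to (I) and (II)). -/
def SatisfiesIII_IV : Prop :=
  ∃ (ι : Type u) (rel : ι → ι → Prop),
    (∀ i, rel i i) ∧ (∀ {i j k}, rel i j → rel j k → rel i k) ∧
    Nonempty ι ∧ (∀ i j, ∃ k, rel i k ∧ rel j k) ∧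
    ∃ (D : SplitSystem.{u, u} Sᵐᵒᵖ ι rel) (c : LimitCocone Sᵐᵒᵖ D U)
      (proj : ∀ i, LinMap Sᵐᵒᵖ U (D.obj i).carrier),
      (∀ i, IsFG Sᵐᵒᵖ (D.obj i).carrier ∧ CategoryTheory.Injective (D.obj i)) ∧
      IsCogenSet Sᵐᵒᵖ {M | ∃ i, M = D.obj i} ∧
      (∀ i (x : (D.obj i).carrier), (proj i).1 ((c.incl i).1 x) = x) ∧
      (∀ {i j} (h : rel i j) (x : U), (D.split h).1 ((proj j).1 x) = (proj i).1 x) ∧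
      Function.Injective (lambdaMap R S U) ∧
      Set.range (lambdaMap R S U) =
        {g : LinMap Sᵐᵒᵖ U U | ∃ (i : ι) (γ : LinMap Sᵐᵒᵖ (D.obj i).carrier U),
          g.1 = fun x => γ.1 ((proj i).1 x)}

/-- A Morita duality `R`-`S`-bimodule. -/
def IsMoritaDualityBimod : Prop :=
  IsUnitary R U ∧ IsUnitary Sᵐᵒᵖ U ∧ SatisfiesI_II R S U ∧ SatisfiesIII_IV R S U

end bimod

section cats

variable (R : Type u) [NonUnitalRing R]

/-- The category of finitely generated unitary left `R`-modules. -/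
abbrev FGMod := CategoryTheory.ObjectProperty.FullSubcategory (fun M : UMod.{u, u} R => IsFG R M.carrier)

/-- The category of finitely generated injective unitary left `R`-modules. -/
abbrev InjFGMod := CategoryTheory.ObjectProperty.FullSubcategory
  (fun M : UMod.{u, u} R => IsFG R M.carrier ∧ CategoryTheory.Injective M)

/-- The category of finitely generated projective unitary left `R`-modules. -/
abbrev ProjFGMod := CategoryTheory.ObjectProperty.FullSubcategory
  (fun M : UMod.{u, u} R => IsFG R M.carrier ∧ CategoryTheory.Projective M)

/-- There is a duality (an additive contravariant equivalence) between the
categories of finitely generated unitary left `R`-modules and finitely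
generated unitary right `S`-modules. -/
def ExistsFGDuality (R S : Type u) [NonUnitalRing R] [NonUnitalRing S] : Prop :=
  ∃ F : (FGMod R)ᵒᵖ ⥤ FGMod Sᵐᵒᵖ, F.Additive ∧ F.IsEquivalence

/-- Bundled ring with local units. -/
structure RingLU : Type (u + 1) where
  carrier : Type u
  [ring : NonUnitalRing carrier]
  [lu : HasLocalUnits carrier]

attribute [instance] RingLU.ring RingLU.lu

/-- A ring with local units is left Morita if there is a ring `R'` with local
units and a duality from finitely generated unitary left `R`-modules to
finitely generated unitary right `R'`-modules. -/
def IsLeftMorita : Prop :=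
  ∃ R' : RingLU.{u}, ExistsFGDuality R R'.carrier

/-- `R` is left locally finite: every finitely generated unitary left
`R`-module has finite length (equivalently, the lengths of chains of
submodules of such a module are bounded). -/
def IsLeftLocallyFinite : Prop :=
  ∀ (M : Type u) [AddCommGroup M] [LMod R M], IsUnitary R M → IsFG R M →
    ∃ n : ℕ, ∀ c : Fin (n + 1) → AddSubgroup M,
      (∀ i (r : R) x, x ∈ c i → r • x ∈ c i) →
      ¬(∀ i : Fin n, c i.castSucc < c i.succ)

/-- `R` is left locally noetherian: every finitely generated unitary left
`R`-module is noetherian. -/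
def IsLeftLocallyNoetherian : Prop :=
  ∀ (M : Type u) [AddCommGroup M] [LMod R M], IsUnitary R M → IsFG R M →
    ∀ c : ℕ → AddSubgroup M, (∀ i (r : R) x, x ∈ c i → r • x ∈ c i) →
      (∀ i, c i ≤ c (i + 1)) → ∃ n, ∀ m, n ≤ m → c m = c n

end cats

section principal

variable (R : Type u) [NonUnitalRing R]

/-- The principal left ideal `Re` of a non-unital ring, for an element `e`. -/
def principalLeft (e : R) : AddSubgroup R where
  carrier := {y : R | ∃ r : R, y = r * e}
  add_mem' := by
    rintro a b ⟨r, hr⟩ ⟨s, hs⟩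
    exact ⟨r + s, by rw [hr, hs, add_mul]⟩
  zero_mem' := ⟨0, by rw [zero_mul]⟩
  neg_mem' := by
    rintro a ⟨r, hr⟩
    exact ⟨-r, by rw [hr, neg_mul]⟩

instance (e : R) : LMod R ↥(principalLeft R e) where
  smul r y := ⟨r * y.1, by obtain ⟨s, hs⟩ := y.2; exact ⟨r * s, by rw [hs, mul_assoc]⟩⟩
  smul_add' r m n := Subtype.ext (mul_add r m.1 n.1)
  add_smul' r s m := Subtype.ext (add_mul r s m.1)
  mul_smul' r s m := Subtype.ext (mul_assoc r s m.1)

/-- The principal right ideal `fS` of a non-unital ring, as a right module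
(left module over the opposite ring). -/
def principalRight (f : R) : AddSubgroup R where
  carrier := {y : R | ∃ s : R, y = f * s}
  add_mem' := by
    rintro a b ⟨r, hr⟩ ⟨s, hs⟩
    exact ⟨r + s, by rw [hr, hs, mul_add]⟩
  zero_mem' := ⟨0, by rw [mul_zero]⟩
  neg_mem' := by
    rintro a ⟨r, hr⟩
    exact ⟨-r, by rw [hr, mul_neg]⟩

instance (f : R) : LMod Rᵐᵒᵖ ↥(principalRight R f) where
  smul s y := ⟨y.1 * s.unop, by
    obtain ⟨t, ht⟩ := y.2; exact ⟨t * s.unop, by rw [ht, mul_assoc]⟩⟩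
  smul_add' s m n := Subtype.ext (add_mul m.1 n.1 s.unop)
  add_smul' s t m := Subtype.ext (mul_add m.1 s.unop t.unop)
  mul_smul' s t m := Subtype.ext (mul_assoc m.1 t.unop s.unop).symm

end principal

section restr

variable (R S : Type u) [NonUnitalRing R] [NonUnitalRing S] [HasLocalUnits R] [HasLocalUnits S]
variable (U : Type u) [AddCommGroup U] [LMod R U] [LMod Sᵐᵒᵖ U] [SMulCommClass R Sᵐᵒᵖ U]
  [SMulCommClass Sᵐᵒᵖ R U]

/-- The restriction of the contravariant functor `Hom_R(−,U)S` to finitely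
generated modules, given that it preserves finite generation. -/
def dualLRestr (hFG : ∀ X : UMod.{u, u} R, IsFG R X.carrier →
    IsFG Sᵐᵒᵖ ((dualL R S U).obj (Opposite.op X)).carrier) :
    (FGMod R)ᵒᵖ ⥤ FGMod Sᵐᵒᵖ :=
  CategoryTheory.ObjectProperty.lift _
    ((CategoryTheory.ObjectProperty.ι _).op ⋙ dualL R S U)
    (fun X => hFG X.unop.obj X.unop.property)

/-- The restriction of the contravariant functor `RHom_S(−,U)` to finitely
generated modules, given that it preserves finite generation. -/
def dualRRestr (hFG : ∀ Y : UMod.{u, u} Sᵐᵒᵖ, IsFG Sᵐᵒᵖ Y.carrier →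
    IsFG R ((dualR R S U).obj (Opposite.op Y)).carrier) :
    (FGMod Sᵐᵒᵖ)ᵒᵖ ⥤ FGMod R :=
  CategoryTheory.ObjectProperty.lift _
    ((CategoryTheory.ObjectProperty.ι _).op ⋙ dualR R S U)
    (fun Y => hFG Y.unop.obj Y.unop.property)

end restr
/-! ### Direct sums of modules over non-unital rings -/

section dfinsupp

variable {R : Type u} [NonUnitalRing R] {ι : Type v} {β : ι → Type w}
  [∀ i, AddCommGroup (β i)] [∀ i, LMod R (β i)]

/-- Pointwise scalar action on a direct sum. -/
def dfinsuppSMul (r : R) (f : Π₀ i, β i) : Π₀ i, β i :=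
  f.mapRange (fun _ x => r • x) (fun _ => LMod.smul_zero' r)

theorem dfinsuppSMul_apply (r : R) (f : Π₀ i, β i) (i : ι) :
    dfinsuppSMul r f i = r • f i := DFinsupp.mapRange_apply _ _ f i

instance DFinsupp.instLMod : LMod R (Π₀ i, β i) where
  smul := dfinsuppSMul
  smul_add' r f g := by
    ext i
    show dfinsuppSMul r (f + g) i = (dfinsuppSMul r f + dfinsuppSMul r g) i
    rw [DFinsupp.add_apply, dfinsuppSMul_apply, dfinsuppSMul_apply, dfinsuppSMul_apply,
      DFinsupp.add_apply]
    exact LMod.smul_add' r (f i) (g i)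
  add_smul' r s f := by
    ext i
    show dfinsuppSMul (r + s) f i = (dfinsuppSMul r f + dfinsuppSMul s f) i
    rw [DFinsupp.add_apply, dfinsuppSMul_apply, dfinsuppSMul_apply, dfinsuppSMul_apply]
    exact LMod.add_smul' r s (f i)
  mul_smul' r s f := by
    ext i
    show dfinsuppSMul (r * s) f i = dfinsuppSMul r (dfinsuppSMul s f) i
    rw [dfinsuppSMul_apply, dfinsuppSMul_apply, dfinsuppSMul_apply]
    exact LMod.mul_smul' r s (f i)

@[simp] theorem DFinsupp.lmod_smul_apply (r : R) (f : Π₀ i, β i) (i : ι) :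
    (r • f) i = r • f i := dfinsuppSMul_apply r f i

end dfinsupp
/-! ### Miscellaneous helpers: submodule stability, `Pf`, traces, sums -/

section extra

variable {R : Type u} [NonUnitalRing R] {M : Type v} [AddCommGroup M] [LMod R M]

theorem closure_smul_stable {s : Set M}
    (h : ∀ (r : R) (x : M), x ∈ s → r • x ∈ AddSubgroup.closure s) (r : R) {x : M}
    (hx : x ∈ AddSubgroup.closure s) : r • x ∈ AddSubgroup.closure s := by
  induction hx using AddSubgroup.closure_induction with
  | mem y hy => exact h r y hy
  | zero => rw [LMod.smul_zero']; exact AddSubgroup.zero_mem _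
  | add y z hy hz ihy ihz => rw [LMod.smul_add']; exact AddSubgroup.add_mem _ ihy ihz
  | neg y hy ihy => rw [LMod.smul_neg']; exact AddSubgroup.neg_mem _ ihy

end extra

section pe

variable (R S : Type u) [NonUnitalRing R] [NonUnitalRing S]
variable (P : Type u) [AddCommGroup P] [LMod R P] [LMod Sᵐᵒᵖ P] [SMulCommClass R Sᵐᵒᵖ P]

/-- The submodule `Pf = {x·f | x ∈ P}` of `P`, for `f ∈ S`. -/
def peSub (f : S) : AddSubgroup P where
  carrier := Set.range (fun x : P => (op f : Sᵐᵒᵖ) • x)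
  add_mem' := by
    rintro a b ⟨x, rfl⟩ ⟨y, rfl⟩
    exact ⟨x + y, LMod.smul_add' (op f) x y⟩
  zero_mem' := ⟨0, LMod.smul_zero' _⟩
  neg_mem' := by
    rintro a ⟨x, rfl⟩
    exact ⟨-x, LMod.smul_neg' (op f) x⟩

instance (f : S) : LMod R ↥(peSub S P f) where
  smul r y := ⟨r • y.1, by
    obtain ⟨x, hx⟩ := y.2
    exact ⟨r • x, by rw [← hx, smul_comm]⟩⟩
  smul_add' r m n := Subtype.ext (LMod.smul_add' r m.1 n.1)
  add_smul' r s m := Subtype.ext (LMod.add_smul' r s m.1)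
  mul_smul' r s m := Subtype.ext (LMod.mul_smul' r s m.1)

variable {R S P} in
theorem sTrSub_smul_stable {M : Type u} [AddCommGroup M] [LMod R M] (r : R) {m : M}
    (hm : m ∈ sTrSub R S P M) : r • m ∈ sTrSub R S P M := by
  refine closure_smul_stable (fun r' x hx => ?_) r hm
  obtain ⟨g, hg, y, rfl⟩ := hx
  exact AddSubgroup.subset_closure ⟨g, hg, r' • y, (g.2.map_smul r' y).symm⟩

instance (M : Type u) [AddCommGroup M] [LMod R M] : LMod R ↥(sTrSub R S P M) where
  smul r y := ⟨r • y.1, sTrSub_smul_stable r y.2⟩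
  smul_add' r m n := Subtype.ext (LMod.smul_add' r m.1 n.1)
  add_smul' r s m := Subtype.ext (LMod.add_smul' r s m.1)
  mul_smul' r s m := Subtype.ext (LMod.mul_smul' r s m.1)

end pe

section sum

/-- Summation over a direct sum against a family of additive maps
(the canonical map `⊕_I M_i → N`). -/
noncomputable def dfinsuppSum {ι : Type u} {β : ι → Type v} [∀ i, AddCommGroup (β i)]
    {γ : Type w} [AddCommGroup γ] (f : ∀ i, β i →+ γ) (x : Π₀ i, β i) : γ :=
  letI := Classical.decEq ι
  DFinsupp.sumAddHom f x

end sum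

/-! ### Auxiliary lemmas for Statement 9 -/

section aux1

variable {C : Type u} [NonUnitalRing C]

theorem LMod.neg_smul' {X : Type v} [AddCommGroup X] [LMod C X] (r : C) (x : X) :
    (-r) • x = -(r • x) := by
  have h : r • x + (-r) • x = 0 := by
    rw [← LMod.add_smul', add_neg_cancel, LMod.zero_smul']
  exact eq_neg_of_add_eq_zero_right h

theorem IsLHom.map_sub {M : Type v} {N : Type w}
    [AddCommGroup M] [AddCommGroup N] [LMod C M] [LMod C N] {f : M → N}
    (hf : IsLHom C f) (a b : M) : f (a - b) = f a - f b := by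
  rw [sub_eq_add_neg, hf.map_add, hf.map_neg, ← sub_eq_add_neg]

theorem exists_idem_smul [HasLocalUnits C] {X : Type v} [AddCommGroup X] [LMod C X]
    {x : X} (hx : x ∈ umax C X) : ∃ e : C, e * e = e ∧ e • x = x := by
  classical
  induction hx using AddSubgroup.closure_induction with
  | mem y hy =>
    obtain ⟨c, z, rfl⟩ := hy
    obtain ⟨e, he, hc⟩ := HasLocalUnits.exists_unit {c}
    exact ⟨e, he, by rw [← LMod.mul_smul', (hc c (Finset.mem_singleton_self c)).1]⟩
  | zero =>
    obtain ⟨e, he, -⟩ := HasLocalUnits.exists_unit (∅ : Finset C)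
    exact ⟨e, he, LMod.smul_zero' e⟩
  | add y z hy hz ihy ihz =>
    obtain ⟨e, he, hey⟩ := ihy
    obtain ⟨f, hf, hfz⟩ := ihz
    obtain ⟨g, hg, hgu⟩ := HasLocalUnits.exists_unit {e, f}
    have h1 : g • y = y := by
      calc g • y = g • (e • y) := by rw [hey]
        _ = (g * e) • y := (LMod.mul_smul' g e y).symm
        _ = e • y := by rw [(hgu e (by simp)).1]
        _ = y := hey
    have h2 : g • z = z := by
      calc g • z = g • (f • z) := by rw [hfz]
        _ = (g * f) • z := (LMod.mul_smul' g f z).symm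
        _ = f • z := by rw [(hgu f (by simp)).1]
        _ = z := hfz
    exact ⟨g, hg, by rw [LMod.smul_add', h1, h2]⟩
  | neg y hy ihy =>
    obtain ⟨e, he, hey⟩ := ihy
    exact ⟨e, he, by rw [LMod.smul_neg', hey]⟩

theorem lmod_smul_sum {X : Type v} [AddCommGroup X] [LMod C X] (c : C)
    {κ : Type*} (t : Finset κ) (g : κ → X) :
    c • (∑ k ∈ t, g k) = ∑ k ∈ t, c • g k := by
  classical
  induction t using Finset.cons_induction with
  | empty => simpa using LMod.smul_zero' c
  | cons a t ha ih => rw [Finset.sum_cons, Finset.sum_cons, LMod.smul_add', ih]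

theorem addfn_sum {M : Type v} {N : Type w} [AddCommGroup M] [AddCommGroup N]
    (f : M → N) (h0 : f 0 = 0) (hadd : ∀ a b, f (a + b) = f a + f b)
    {κ : Type*} (t : Finset κ) (g : κ → M) :
    f (∑ k ∈ t, g k) = ∑ k ∈ t, f (g k) := by
  classical
  induction t using Finset.cons_induction with
  | empty => simpa using h0
  | cons a t ha ih => rw [Finset.sum_cons, Finset.sum_cons, hadd, ih]

theorem exists_upper {ι : Type v} {rel : ι → ι → Prop}
    (hrefl : ∀ i, rel i i) (htrans : ∀ {i j k}, rel i j → rel j k → rel i k)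
    (hne : Nonempty ι) (hdir : ∀ i j, ∃ k, rel i k ∧ rel j k)
    (l : List ι) : ∃ k, ∀ i ∈ l, rel i k := by
  induction l with
  | nil => exact ⟨hne.some, by simp⟩
  | cons a l ih =>
    obtain ⟨k', hk'⟩ := ih
    obtain ⟨k, hak, hk'k⟩ := hdir a k'
    refine ⟨k, fun i hi => ?_⟩
    rcases List.mem_cons.mp hi with rfl | hi
    · exact hak
    · exact htrans (hk' i hi) hk'k

end aux1

/-! ### Retraction maps out of a split direct system -/

section retraction

variable {R : Type u} [NonUnitalRing R] {P : Type u} [AddCommGroup P] [LMod R P]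
variable {ι : Type u} {rel : ι → ι → Prop}

theorem split_of_map (D : SplitSystem.{u, u} R ι rel) {i j k : ι}
    (hij : rel i j) (hjk : rel j k) (hik : rel i k) (y : (D.obj j).carrier) :
    (D.split hik).1 ((D.map hjk).1 y) = (D.split hij).1 y := by
  rw [← D.split_split hij hjk hik, D.split_map]

theorem split_indep (D : SplitSystem.{u, u} R ι rel) (c : LimitCocone R D P)
    (hdir : ∀ i j, ∃ k, rel i k ∧ rel j k)
    (htrans : ∀ {i j k}, rel i j → rel j k → rel i k)
    {i j k : ι} (hij : rel i j) (hik : rel i k)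
    {y : (D.obj j).carrier} {z : (D.obj k).carrier}
    (h : (c.incl j).1 y = (c.incl k).1 z) :
    (D.split hij).1 y = (D.split hik).1 z := by
  obtain ⟨l, hjl, hkl⟩ := hdir j k
  have h0 : (c.incl l).1 ((D.map hjl).1 y - (D.map hkl).1 z) = 0 := by
    rw [sub_eq_add_neg, (c.incl l).2.map_add, (c.incl l).2.map_neg,
      c.compat hjl, c.compat hkl, h, add_neg_cancel]
  obtain ⟨o, hlo, hzero⟩ := c.eventually_zero l _ h0
  have h1 : (D.map hlo).1 ((D.map hjl).1 y) = (D.map hlo).1 ((D.map hkl).1 z) := by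
    rw [sub_eq_add_neg, (D.map hlo).2.map_add, (D.map hlo).2.map_neg,
      ← sub_eq_add_neg] at hzero
    exact sub_eq_zero.mp hzero
  rw [D.map_map hjl hlo (htrans hjl hlo), D.map_map hkl hlo (htrans hkl hlo)] at h1
  calc (D.split hij).1 y
      = (D.split (htrans hij (htrans hjl hlo))).1 ((D.map (htrans hjl hlo)).1 y) :=
        (split_of_map D hij (htrans hjl hlo) _ y).symm
    _ = (D.split (htrans hij (htrans hjl hlo))).1 ((D.map (htrans hkl hlo)).1 z) := by rw [h1]
    _ = (D.split hik).1 z := split_of_map D hik (htrans hkl hlo) _ z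

theorem exists_rep (D : SplitSystem.{u, u} R ι rel) (c : LimitCocone R D P)
    (hdir : ∀ i j, ∃ k, rel i k ∧ rel j k) (i : ι) (x : P) :
    ∃ j, ∃ _ : rel i j, ∃ y : (D.obj j).carrier, (c.incl j).1 y = x := by
  obtain ⟨j₀, y₀, hy₀⟩ := c.exhaustive x
  obtain ⟨k, hik, hj₀k⟩ := hdir i j₀
  exact ⟨k, hik, (D.map hj₀k).1 y₀, by rw [c.compat hj₀k, hy₀]⟩

/-- The retraction `P → P_i` induced by the splittings. -/
noncomputable def retAux (D : SplitSystem.{u, u} R ι rel) (c : LimitCocone R D P)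
    (hdir : ∀ i j, ∃ k, rel i k ∧ rel j k) (i : ι) (x : P) : (D.obj i).carrier :=
  (D.split (exists_rep D c hdir i x).choose_spec.choose).1
    (exists_rep D c hdir i x).choose_spec.choose_spec.choose

theorem retAux_eq (D : SplitSystem.{u, u} R ι rel) (c : LimitCocone R D P)
    (hdir : ∀ i j, ∃ k, rel i k ∧ rel j k)
    (htrans : ∀ {i j k}, rel i j → rel j k → rel i k)
    {i j : ι} (hij : rel i j) {y : (D.obj j).carrier} {x : P}
    (h : (c.incl j).1 y = x) :
    retAux D c hdir i x = (D.split hij).1 y := by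
  have hspec := (exists_rep D c hdir i x).choose_spec.choose_spec.choose_spec
  exact split_indep D c hdir htrans _ hij (hspec.trans h.symm)

theorem retAux_incl (D : SplitSystem.{u, u} R ι rel) (c : LimitCocone R D P)
    (hdir : ∀ i j, ∃ k, rel i k ∧ rel j k)
    (htrans : ∀ {i j k}, rel i j → rel j k → rel i k)
    (hrefl : ∀ i, rel i i) (i : ι) (w : (D.obj i).carrier) :
    retAux D c hdir i ((c.incl i).1 w) = w := by
  rw [retAux_eq D c hdir htrans (hrefl i) rfl]
  have h1 := D.split_map (hrefl i) w
  rwa [D.map_self] at h1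

theorem retAux_add (D : SplitSystem.{u, u} R ι rel) (c : LimitCocone R D P)
    (hdir : ∀ i j, ∃ k, rel i k ∧ rel j k)
    (htrans : ∀ {i j k}, rel i j → rel j k → rel i k)
    (i : ι) (x x' : P) :
    retAux D c hdir i (x + x') = retAux D c hdir i x + retAux D c hdir i x' := by
  obtain ⟨j, hij, y, hy⟩ := exists_rep D c hdir i x
  obtain ⟨j', hij', y', hy'⟩ := exists_rep D c hdir i x'
  obtain ⟨k, hjk, hj'k⟩ := hdir j j'
  have hik : rel i k := htrans hij hjk
  have h1 : (c.incl k).1 ((D.map hjk).1 y) = x := by rw [c.compat, hy]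
  have h2 : (c.incl k).1 ((D.map hj'k).1 y') = x' := by rw [c.compat, hy']
  have h3 : (c.incl k).1 ((D.map hjk).1 y + (D.map hj'k).1 y') = x + x' := by
    rw [(c.incl k).2.map_add, h1, h2]
  rw [retAux_eq D c hdir htrans hik h3, retAux_eq D c hdir htrans hik h1,
    retAux_eq D c hdir htrans hik h2, (D.split hik).2.map_add]

theorem retAux_smul (D : SplitSystem.{u, u} R ι rel) (c : LimitCocone R D P)
    (hdir : ∀ i j, ∃ k, rel i k ∧ rel j k)
    (htrans : ∀ {i j k}, rel i j → rel j k → rel i k)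
    (i : ι) (r : R) (x : P) :
    retAux D c hdir i (r • x) = r • retAux D c hdir i x := by
  obtain ⟨j, hij, y, hy⟩ := exists_rep D c hdir i x
  have h1 : (c.incl j).1 (r • y) = r • x := by rw [(c.incl j).2.map_smul, hy]
  rw [retAux_eq D c hdir htrans hij h1, retAux_eq D c hdir htrans hij hy,
    (D.split hij).2.map_smul]

end retraction

/-! ### Dual bases for finitely generated projective unitary modules -/

section freebasis

variable (R : Type u) [NonUnitalRing R]

instance finPiLMod (n : ℕ) : LMod R (Fin n → R) where
  smul r g := fun k => r * g k
  smul_add' r g g' := funext fun k => mul_add r (g k) (g' k)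
  add_smul' r r' g := funext fun k => add_mul r r' (g k)
  mul_smul' r r' g := funext fun k => mul_assoc r r' (g k)

theorem freeMod_unitary [HasLocalUnits R] (n : ℕ) : IsUnitary R (Fin n → R) := by
  classical
  intro g
  obtain ⟨e, he, hu⟩ := HasLocalUnits.exists_unit (Finset.univ.image g)
  have hg : (e • g : Fin n → R) = g :=
    funext fun k => (hu (g k) (Finset.mem_image_of_mem g (Finset.mem_univ k))).1
  have hmem : (e • g : Fin n → R) ∈
      AddSubgroup.closure {x : Fin n → R | ∃ (r : R) (m : Fin n → R), x = r • m} :=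
    AddSubgroup.subset_closure ⟨e, g, rfl⟩
  rwa [hg] at hmem

/-- A free unitary module of finite rank. -/
def freeUMod [HasLocalUnits R] (n : ℕ) : UMod.{u, u} R :=
  { carrier := Fin n → R, unitary := freeMod_unitary R n }

theorem dualBasis_of_fg_proj [HasLocalUnits R] (Q : UMod.{u, u} R)
    (hFG : IsFG R Q.carrier) (hproj : CategoryTheory.Projective Q) :
    ∃ (n : ℕ) (m : Fin n → Q.carrier) (lam : Fin n → LinMap R Q.carrier R),
      ∀ w : Q.carrier, w = ∑ k, ((lam k).1 w) • m k := by
  classical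
  obtain ⟨s, hs⟩ := hFG
  set l := s.toList with hl
  set n := l.length with hn
  set m : Fin n → Q.carrier := fun k => l.get k with hm
  have hmem_m : ∀ x ∈ (↑s : Set Q.carrier), ∃ k, m k = x := by
    intro x hx
    obtain ⟨k, hk⟩ := List.get_of_mem (Finset.mem_toList.mpr hx)
    exact ⟨k, hk⟩
  set π : (Fin n → R) → Q.carrier := fun g => ∑ k, g k • m k with hπ
  have hπadd : ∀ g g', π (g + g') = π g + π g' := by
    intro g g'
    simp only [π]
    rw [← Finset.sum_add_distrib]
    exact Finset.sum_congr rfl fun k _ => LMod.add_smul' (g k) (g' k) (m k)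
  have hπsmul : ∀ (r : R) (g : Fin n → R), π (r • g) = r • π g := by
    intro r g
    simp only [π]
    rw [lmod_smul_sum]
    exact Finset.sum_congr rfl fun k _ => LMod.mul_smul' r (g k) (m k)
  have hsingle : ∀ (k₀ : Fin n) (r : R), π (fun k => if k = k₀ then r else 0) = r • m k₀ := by
    intro k₀ r
    simp only [π]
    rw [Finset.sum_eq_single k₀]
    · rw [if_pos rfl]
    · intro k _ hk
      rw [if_neg hk]
      exact LMod.zero_smul' (m k)
    · intro h
      exact absurd (Finset.mem_univ k₀) h
  have hπzero : π 0 = 0 := by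
    simp only [π]
    exact Finset.sum_eq_zero fun k _ => LMod.zero_smul' (m k)
  have hπneg : ∀ g, π (-g) = -(π g) := by
    intro g
    simp only [π]
    rw [← Finset.sum_neg_distrib]
    exact Finset.sum_congr rfl fun k _ => LMod.neg_smul' (g k) (m k)
  set Rng : AddSubgroup Q.carrier :=
    { carrier := Set.range π
      add_mem' := by rintro a b ⟨g, rfl⟩ ⟨g', rfl⟩; exact ⟨g + g', hπadd g g'⟩
      zero_mem' := ⟨0, hπzero⟩
      neg_mem' := by rintro a ⟨g, rfl⟩; exact ⟨-g, hπneg g⟩ } with hRng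
  have hsurj : ∀ w : Q.carrier, ∃ g, π g = w := by
    intro w
    have hsub : ((↑s : Set Q.carrier) ∪
        {x | ∃ (r : R) (y : Q.carrier), y ∈ (↑s : Set Q.carrier) ∧ x = r • y}) ⊆ ↑Rng := by
      rintro a (ha | ⟨r, y, hy, rfl⟩)
      · obtain ⟨k₀, rfl⟩ := hmem_m a ha
        obtain ⟨e, _, hex⟩ := exists_idem_smul (C := R) (Q.unitary (m k₀))
        exact ⟨fun k => if k = k₀ then e else 0, by rw [hsingle]; exact hex⟩
      · obtain ⟨k₀, rfl⟩ := hmem_m y hy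
        exact ⟨fun k => if k = k₀ then r else 0, hsingle k₀ r⟩
    exact (AddSubgroup.closure_le Rng).mpr hsub (hs w)
  let F : UMod.{u, u} R := freeUMod R n
  let πhat : F ⟶ Q := ⟨π, ⟨hπadd, hπsmul⟩⟩
  haveI : CategoryTheory.Epi πhat := ⟨fun {Z} u v huv => LinMap.ext (funext fun w => by
    obtain ⟨g, rfl⟩ := hsurj w
    exact congrArg (fun t : F ⟶ Z => t.1 g) huv)⟩
  haveI := hproj
  let σ : Q ⟶ F := CategoryTheory.Projective.factorThru (𝟙 Q) πhat
  have hσ : ∀ w, π (σ.1 w) = w := fun w =>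
    congrArg (fun t : Q ⟶ Q => t.1 w)
      (CategoryTheory.Projective.factorThru_comp (𝟙 Q) πhat)
  refine ⟨n, m, fun k => ⟨fun w => σ.1 w k, ⟨fun a b => ?_, fun r a => ?_⟩⟩, fun w => ?_⟩
  · exact congrFun (σ.2.map_add a b) k
  · exact congrFun (σ.2.map_smul r a) k
  · exact (hσ w).symm

end freebasis

/-! ### The "tensor" endomorphisms `β ⊗ x` and the dual basis for `P` -/

section tensorsec

variable {R : Type u} [NonUnitalRing R] {P : Type u} [AddCommGroup P] [LMod R P]
variable {S : NonUnitalSubring (LinMap R P P)}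
variable [LMod (↥S)ᵐᵒᵖ P] [SMulCommClass R (↥S)ᵐᵒᵖ P]

theorem tensor_mem
    (hact : ∀ (s : ↥S) (x : P), (MulOpposite.op s) • x = (s : LinMap R P P).1 x)
    (hSEnd : ((AddSubgroup.closure
        {h : LinMap R P P | ∃ s ∈ S, ∃ g : LinMap R P P, h = s * g} :
        AddSubgroup (LinMap R P P)) : Set (LinMap R P P)) = ↑S)
    {B : LinMap R P R} (hB : B ∈ umax ↥S (LinMap R P R)) (x : P) :
    gammaInner (N := P) x B ∈ S := by
  induction hB using AddSubgroup.closure_induction with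
  | mem g hg =>
    obtain ⟨s, g', rfl⟩ := hg
    have heq : gammaInner (N := P) x (s • g') = (↑s : LinMap R P P) * gammaInner x g' := by
      refine LinMap.ext (funext fun z => ?_)
      show ((s • g').1 z) • x = (gammaInner (N := P) x g').1 ((↑s : LinMap R P P).1 z)
      rw [LinMap.pre_smul_apply, hact]
      rfl
    rw [heq]
    have hmem' : (↑s : LinMap R P P) * gammaInner (N := P) x g' ∈
        AddSubgroup.closure {h : LinMap R P P | ∃ s ∈ S, ∃ g : LinMap R P P, h = s * g} :=
      AddSubgroup.subset_closure ⟨↑s, s.2, gammaInner x g', rfl⟩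
    have h2 : (↑s : LinMap R P P) * gammaInner (N := P) x g' ∈ (↑S : Set (LinMap R P P)) := by
      rw [← hSEnd]
      exact hmem'
    exact h2
  | zero =>
    have heq : gammaInner (N := P) x (0 : LinMap R P R) = 0 :=
      LinMap.ext (funext fun z => LMod.zero_smul' x)
    rw [heq]
    exact zero_mem S
  | add a b ha hb iha ihb =>
    have heq : gammaInner (N := P) x (a + b) = gammaInner x a + gammaInner x b :=
      LinMap.ext (funext fun z => LMod.add_smul' _ _ _)
    rw [heq]
    exact add_mem iha ihb
  | neg a ha iha =>
    have heq : gammaInner (N := P) x (-a) = -(gammaInner (N := P) x a) :=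
      LinMap.ext (funext fun z => LMod.neg_smul' _ _)
    rw [heq]
    exact neg_mem iha

end tensorsec

section dualbasisP

theorem exists_dual_basis
    (R : Type u) [NonUnitalRing R] [HasLocalUnits R]
    (P : Type u) [AddCommGroup P] [LMod R P]
    (hlp : IsLocallyProjective R P)
    (S : NonUnitalSubring (LinMap R P P))
    [LMod (↥S)ᵐᵒᵖ P] [SMulCommClass R (↥S)ᵐᵒᵖ P]
    (hact : ∀ (s : ↥S) (x : P), (MulOpposite.op s) • x = (s : LinMap R P P).1 x)
    (hfg : ∀ f : LinMap R P P, f ∈ S → f * f = f → IsFGSet R (Set.range f.1))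
    (f : ↥S) (hf : f * f = f) :
    ∃ (n : ℕ) (β : Fin n → LinMap R P R) (p : Fin n → P),
      (∀ k, β k ∈ umax ↥S (LinMap R P R)) ∧
      ∀ x : P, op f • x = ∑ k, ((β k).1 x) • p k := by
  classical
  have hfcoe : (↑f : LinMap R P P) * ↑f = ↑f := by
    simpa using congrArg Subtype.val hf
  obtain ⟨t, hts, htgen⟩ := hfg ↑f f.2 hfcoe
  obtain ⟨ι, rel, hrefl, htrans, hne, hdir, D, c, hD⟩ := hlp
  -- common index containing the generators of Pf
  obtain ⟨i, hi⟩ := exists_upper hrefl htrans hne hdir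
    (t.toList.map fun q => (c.exhaustive q).choose)
  have hrng : ∀ q ∈ (↑t : Set P), ∃ y, (c.incl i).1 y = q := by
    intro q hq
    obtain ⟨y, hy⟩ := (c.exhaustive q).choose_spec
    have hrel : rel (c.exhaustive q).choose i :=
      hi _ (List.mem_map_of_mem (Finset.mem_toList.mpr hq))
    exact ⟨(D.map hrel).1 y, by rw [c.compat hrel, hy]⟩
  set Rng : AddSubgroup P :=
    { carrier := Set.range (c.incl i).1
      add_mem' := by rintro a b ⟨y, rfl⟩ ⟨z, rfl⟩; exact ⟨y + z, (c.incl i).2.map_add y z⟩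
      zero_mem' := ⟨0, (c.incl i).2.map_zero⟩
      neg_mem' := by rintro a ⟨y, rfl⟩; exact ⟨-y, (c.incl i).2.map_neg y⟩ } with hRng
  have hPf : ∀ x : P, op f • x ∈ Rng := by
    intro x
    have hx : op f • x ∈ lspan R (↑t : Set P) := by
      rw [hact]
      exact htgen _ ⟨x, rfl⟩
    have hsub : ((↑t : Set P) ∪
        {a | ∃ (r : R) (y : P), y ∈ (↑t : Set P) ∧ a = r • y}) ⊆ ↑Rng := by
      rintro a (ha | ⟨r, y, hy, rfl⟩)
      · exact hrng a ha
      · obtain ⟨w, hw⟩ := hrng y hy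
        exact ⟨r • w, by rw [(c.incl i).2.map_smul, hw]⟩
    exact (AddSubgroup.closure_le Rng).mpr hsub hx
  obtain ⟨n, m, lam, hdb⟩ := dualBasis_of_fg_proj R (D.obj i) (hD i).1 (hD i).2
  set ret : P → (D.obj i).carrier := retAux D c hdir i with hret
  have hretincl : ∀ z ∈ Rng, (c.incl i).1 (ret z) = z := by
    rintro z ⟨w, rfl⟩
    rw [hret, retAux_incl D c hdir htrans hrefl i w]
  set β₀ : Fin n → LinMap R P R := fun k =>
    ⟨fun x => (lam k).1 (ret (op f • x)),
     ⟨fun x y => by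
        rw [LMod.smul_add', hret, retAux_add D c hdir htrans, (lam k).2.map_add],
      fun r x => by
        rw [← smul_comm r (op f) x, hret, retAux_smul D c hdir htrans, (lam k).2.map_smul]⟩⟩
    with hβ₀
  refine ⟨n, fun k => (f : ↥S) • β₀ k, fun k => (c.incl i).1 (m k),
    fun k => smul_mem_umax f (β₀ k), fun x => ?_⟩
  have hffx : op f • (op f • x) = op f • x := by
    rw [← LMod.mul_smul', ← MulOpposite.op_mul, hf]
  have hz : (c.incl i).1 (ret (op f • x)) = op f • x := hretincl _ (hPf x)
  have hβval : ∀ k, ((f : ↥S) • β₀ k).1 x = (lam k).1 (ret (op f • x)) := by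
    intro k
    show (β₀ k).1 (op f • x) = _
    simp only [hβ₀]
    rw [hffx]
  calc op f • x = (c.incl i).1 (ret (op f • x)) := hz.symm
    _ = (c.incl i).1 (∑ k, ((lam k).1 (ret (op f • x))) • m k) := by rw [← hdb]
    _ = ∑ k, ((lam k).1 (ret (op f • x))) • (c.incl i).1 (m k) := by
        rw [addfn_sum (c.incl i).1 (c.incl i).2.map_zero (c.incl i).2.map_add]
        exact Finset.sum_congr rfl fun k _ => (c.incl i).2.map_smul _ _
    _ = ∑ k, (((f : ↥S) • β₀ k).1 x) • (c.incl i).1 (m k) :=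
        Finset.sum_congr rfl fun k _ => by rw [hβval]

end dualbasisP

/-! ## STATEMENT 9
The natural transformation `γ : id → RHom_S(G_P, SHom_R(P,−))` whose
components are the evaluation maps, with `SHom_R(P,γ_M)` an isomorphism for
every `M`, determining a functorial isomorphism
`SHom_R(P,−) ≅ SHom_R(P, RHom_S(G_P, SHom_R(P,−)))`. -/
theorem gamma_natural_transformation
    (R : Type u) [NonUnitalRing R] [HasLocalUnits R]
    (P : Type u) [AddCommGroup P] [LMod R P]
    (hPu : IsUnitary R P)
    (hlp : IsLocallyProjective R P)
    (S : NonUnitalSubring (LinMap R P P)) [HasLocalUnits ↥S]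
    [LMod (↥S)ᵐᵒᵖ P] [SMulCommClass R (↥S)ᵐᵒᵖ P]
    (hact : ∀ (s : ↥S) (x : P), (MulOpposite.op s) • x = (s : LinMap R P P).1 x)
    (hPS : IsUnitary (↥S)ᵐᵒᵖ P)
    (hSEnd : ((AddSubgroup.closure
        {h : LinMap R P P | ∃ s ∈ S, ∃ g : LinMap R P P, h = s * g} :
        AddSubgroup (LinMap R P P)) : Set (LinMap R P P)) = ↑S)
    (hfg : ∀ f : LinMap R P P, f ∈ S → f * f = f → IsFGSet R (Set.range f.1)) :
    ∃ γ : CategoryTheory.Functor.id (UMod.{u, u} R) ⟶ sHomF R ↥S P ⋙ rHomGF R ↥S P,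
      -- the components of `γ` are the evaluation maps
      (∀ (M : UMod.{u, u} R) (m : M.carrier),
        ((γ.app M).1 m).1 = gammaFun R ↥S P M.carrier m) ∧
      -- `SHom_R(P, γ_M)` is an isomorphism of `S`-modules for every `M`
      (∀ M : UMod.{u, u} R, Function.Bijective ((sHomF R ↥S P).map (γ.app M)).1) ∧
      -- which determines a functorial isomorphism
      Nonempty (sHomF R ↥S P ≅ (sHomF R ↥S P ⋙ rHomGF R ↥S P) ⋙ sHomF R ↥S P) := by
  classical
  -- additivity and `R`-equivariance of the evaluation map
  have hadd_gamma : ∀ (M : UMod.{u, u} R) (m m' : M.carrier),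
      gammaFun R ↥S P M.carrier (m + m') =
        gammaFun R ↥S P M.carrier m + gammaFun R ↥S P M.carrier m' := by
    intro M m m'
    refine LinMap.ext (funext fun β => Subtype.ext (LinMap.ext (funext fun x => ?_)))
    exact LMod.smul_add' (β.1.1 x) m m'
  have hsmul_gamma : ∀ (M : UMod.{u, u} R) (r : R) (m : M.carrier),
      gammaFun R ↥S P M.carrier (r • m) = r • gammaFun R ↥S P M.carrier m := by
    intro M r m
    refine LinMap.ext (funext fun β => Subtype.ext (LinMap.ext (funext fun x => ?_)))
    exact (LMod.mul_smul' (β.1.1 x) r m).symm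
  have hmem : ∀ (M : UMod.{u, u} R) (m : M.carrier),
      gammaFun R ↥S P M.carrier m ∈
        umax R (LinMap ↥S (GP R ↥S P) (SHom R ↥S P M.carrier)) := fun M m =>
    umax_mapsTo (C := R) (fun m => gammaFun R ↥S P M.carrier m)
      (hadd_gamma M) (hsmul_gamma M) (M.unitary m)
  -- the natural transformation γ
  let γ : CategoryTheory.Functor.id (UMod.{u, u} R) ⟶ sHomF R ↥S P ⋙ rHomGF R ↥S P :=
  { app := fun M => ⟨fun m => ⟨gammaFun R ↥S P M.carrier m, hmem M m⟩,
      ⟨fun m m' => Subtype.ext (hadd_gamma M m m'),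
       fun r m => Subtype.ext (hsmul_gamma M r m)⟩⟩,
    naturality := fun M N h => LinMap.ext (funext fun m => Subtype.ext (LinMap.ext
      (funext fun β => Subtype.ext (LinMap.ext (funext fun y =>
        (h.2.map_smul (β.1.1 y) m).symm))))) }
  -- bijectivity of SHom(P, γ_M)
  have hbij : ∀ M : UMod.{u, u} R,
      Function.Bijective ((sHomF R ↥S P).map (γ.app M)).1 := by
    intro M
    constructor
    · -- injectivity
      have hker : ∀ α : SHom R ↥S P M.carrier,
          ((sHomF R ↥S P).map (γ.app M)).1 α = 0 → α = 0 := by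
        intro α hα
        have hzero : ∀ (x : P) (B : GP R ↥S P) (y : P),
            (B.1.1 y) • (α.1.1 x) = 0 := by
          intro x B y
          exact congrArg (fun t => (((t.1.1 x).1.1 B).1.1 y)) hα
        obtain ⟨f, hf, hfα⟩ := exists_idem_smul α.2
        obtain ⟨n, β, p, hβmem, hdb⟩ := exists_dual_basis R P hlp S hact hfg f hf
        refine Subtype.ext (LinMap.ext (funext fun x => ?_))
        show α.1.1 x = 0
        have h2 : α.1.1 (op f • x) = α.1.1 x :=
          congrArg (fun t : LinMap R P M.carrier => t.1 x) hfα
        rw [← h2, hdb x, addfn_sum α.1.1 α.1.2.map_zero α.1.2.map_add]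
        refine Finset.sum_eq_zero fun k _ => ?_
        rw [α.1.2.map_smul]
        exact hzero (p k) ⟨β k, hβmem k⟩ x
      intro a b hab
      have hsub : ((sHomF R ↥S P).map (γ.app M)).1 (a - b) = 0 := by
        rw [IsLHom.map_sub ((sHomF R ↥S P).map (γ.app M)).2, hab, sub_self]
      exact sub_eq_zero.mp (hker (a - b) hsub)
    · -- surjectivity
      intro δ
      obtain ⟨f, hf, hfδ⟩ := exists_idem_smul δ.2
      obtain ⟨n, β, p, hβmem, hdb⟩ := exists_dual_basis R P hlp S hact hfg f hf
      set A : Fin n → SHom R ↥S P M.carrier :=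
        fun k => (δ.1.1 (p k)).1.1 ⟨β k, hβmem k⟩ with hA
      refine ⟨∑ k, A k, ?_⟩
      refine Subtype.ext (LinMap.ext (funext fun x => Subtype.ext (LinMap.ext
        (funext fun B => Subtype.ext (LinMap.ext (funext fun y => ?_))))))
      show (B.1.1 y) • ((∑ k, A k).1.1 x) = ((δ.1.1 x).1.1 B).1.1 y
      have hsum1 : (∑ k, A k).1.1 x = ∑ k, (A k).1.1 x :=
        addfn_sum (fun a : SHom R ↥S P M.carrier => a.1.1 x) rfl (fun a b => rfl)
          Finset.univ A
      have hδx : δ.1.1 (op f • x) = δ.1.1 x :=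
        congrArg (fun t : LinMap R P _ => t.1 x) hfδ
      have hstep : (δ.1.1 x).1.1 B =
          ∑ k, ((δ.1.1 (p k)).1.1 (op ((β k).1 x) • B)) := by
        rw [← hδx, hdb x, addfn_sum δ.1.1 δ.1.2.map_zero δ.1.2.map_add]
        refine (addfn_sum (fun F : RHomG R ↥S P (SHom R ↥S P M.carrier) => F.1.1 B) rfl
            (fun a b => rfl) Finset.univ _).trans ?_
        beta_reduce
        refine Finset.sum_congr rfl fun k _ => ?_
        rw [δ.1.2.map_smul]
        rfl
      have hkey : ∀ k : Fin n,
          ((δ.1.1 (p k)).1.1 (op ((β k).1 x) • B)).1.1 y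
            = (B.1.1 y) • ((A k).1.1 x) := by
        intro k
        have hsmem : gammaInner (N := P) x B.1 ∈ S := tensor_mem hact hSEnd B.2 x
        set s : ↥S := ⟨gammaInner (N := P) x B.1, hsmem⟩ with hs
        have hs1 : s • (⟨β k, hβmem k⟩ : GP R ↥S P) = op ((β k).1 x) • B := by
          refine Subtype.ext (LinMap.ext (funext fun z => ?_))
          show (β k).1 (op s • z) = (B.1.1 z) * ((β k).1 x)
          rw [hact]
          show (β k).1 ((B.1.1 z) • x) = _
          rw [(β k).2.map_smul]
          rfl
        rw [← hs1, (δ.1.1 (p k)).1.2.map_smul]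
        show (A k).1.1 (op s • y) = _
        rw [hact]
        show (A k).1.1 ((B.1.1 y) • x) = _
        exact (A k).1.2.map_smul _ _
      rw [hsum1, lmod_smul_sum, hstep]
      refine Eq.trans ?_ (addfn_sum (fun a : SHom R ↥S P M.carrier => a.1.1 y) rfl
        (fun a b => rfl) Finset.univ _).symm
      exact Finset.sum_congr rfl fun k _ => (hkey k).symm
  refine ⟨γ, fun M m => rfl, hbij, ?_⟩
  -- the functorial isomorphism
  let η : sHomF R ↥S P ⟶ (sHomF R ↥S P ⋙ rHomGF R ↥S P) ⋙ sHomF R ↥S P :=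
  { app := fun M => (sHomF R ↥S P).map (γ.app M),
    naturality := fun M N h => by
      refine LinMap.ext (funext fun α => ?_)
      refine Subtype.ext (LinMap.ext (funext fun x => ?_))
      refine Subtype.ext (LinMap.ext (funext fun B => ?_))
      refine Subtype.ext (LinMap.ext (funext fun y => ?_))
      exact (h.2.map_smul (B.1.1 y) (α.1.1 x)).symm }
  haveI hiso : ∀ M : UMod.{u, u} R, CategoryTheory.IsIso (η.app M) := by
    intro M
    obtain ⟨inj, surj⟩ := hbij M
    let e := Equiv.ofBijective _ (hbij M)
    have hsymm : ∀ z, (η.app M).1 (e.symm z) = z := fun z => e.apply_symm_apply z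
    refine ⟨⟨e.symm, ⟨fun a b => ?_, fun s a => ?_⟩⟩, ?_, ?_⟩
    · exact inj (by rw [hsymm, ((η.app M)).2.map_add, hsymm, hsymm])
    · exact inj (by rw [hsymm, ((η.app M)).2.map_smul, hsymm])
    · exact LinMap.ext (funext fun x => e.symm_apply_apply x)
    · exact LinMap.ext (funext fun y => e.apply_symm_apply y)
  haveI : CategoryTheory.IsIso η := CategoryTheory.NatIso.isIso_of_isIso_app η
  exact ⟨CategoryTheory.asIso η⟩
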